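/- Let Δ be the open unit disc in ℂ. Let f_k, f : Δ → Δ be holomorphic maps whose images have compact closure contained in Δ, and suppose f_k → f uniformly on compact subsets of Δ. Then τ(f_k) → τ(f), where τ(g) denotes the unique fixed point of a holomorphic self-map g of Δ with relatively compact image. -/

import Mathlib

open Complex Metric Set Function

noncomputable def Complex.abs : AbsoluteValue ℂ ℝ := IsAbsoluteValue.toAbsoluteValue (norm : ℂ → ℝ)

lemma Complex.norm_eq_abs (z : ℂ) : ‖z‖ = Complex.abs z := rfl

lemma Complex.abs_conj (z : ℂ) : Complex.abs ((starRingEnd ℂ) z) = Complex.abs z :=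
  Complex.norm_conj z

lemma Complex.sq_abs (z : ℂ) : Complex.abs z ^ 2 = Complex.normSq z := Complex.sq_norm z

lemma Complex.abs_re_le_abs (z : ℂ) : |z.re| ≤ Complex.abs z := Complex.abs_re_le_norm z

lemma Complex.abs_ofReal (r : ℝ) : Complex.abs (r : ℂ) = |r| := Complex.norm_real r

lemma Complex.continuous_abs : Continuous Complex.abs := continuous_norm

noncomputable def mob (c z : ℂ) : ℂ := (c - z) / (1 - (starRingEnd ℂ) c * z)
noncomputable def pd (a b : ℂ) : ℝ :=
  Complex.abs (a - b) / Complex.abs (1 - (starRingEnd ℂ) a * b)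

lemma abs_mob (c z : ℂ) : Complex.abs (mob c z) = pd c z := by
  simp [mob, pd, map_div₀]

lemma pd_nonneg (a b : ℂ) : 0 ≤ pd a b := div_nonneg (by positivity) (by positivity)

lemma denom_lower {a b : ℂ} :
    1 - Complex.abs a * Complex.abs b ≤ Complex.abs (1 - (starRingEnd ℂ) a * b) := by
  have h1 : Complex.abs ((starRingEnd ℂ) a * b) = Complex.abs a * Complex.abs b := by
    rw [map_mul, Complex.abs_conj]
  have := norm_sub_norm_le (1 : ℂ) ((starRingEnd ℂ) a * b)
  simpa [Complex.norm_eq_abs, h1] using this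

lemma denom_pos {a b : ℂ} (h : Complex.abs a * Complex.abs b < 1) :
    0 < Complex.abs (1 - (starRingEnd ℂ) a * b) :=
  lt_of_lt_of_le (by linarith) denom_lower

lemma denom_ne {a b : ℂ} (h : Complex.abs a * Complex.abs b < 1) :
    (1 : ℂ) - (starRingEnd ℂ) a * b ≠ 0 := by
  intro h0
  have := denom_pos h
  rw [h0] at this
  simp at this

lemma denom_upper {a b : ℂ} :
    Complex.abs (1 - (starRingEnd ℂ) a * b) ≤ 1 + Complex.abs a * Complex.abs b := by
  have h1 : Complex.abs ((starRingEnd ℂ) a * b) = Complex.abs a * Complex.abs b := by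
    rw [map_mul, Complex.abs_conj]
  have := norm_sub_le (1 : ℂ) ((starRingEnd ℂ) a * b)
  simpa [Complex.norm_eq_abs, h1] using this

lemma normSq_identity (a b : ℂ) :
    Complex.normSq (1 - (starRingEnd ℂ) a * b) - Complex.normSq (a - b)
      = (1 - Complex.normSq a) * (1 - Complex.normSq b) := by
  simp only [Complex.normSq_apply, Complex.sub_re, Complex.sub_im, Complex.mul_re, Complex.mul_im,
    Complex.one_re, Complex.one_im, Complex.conj_re, Complex.conj_im]
  ring

/-- sharp bound: `|a-b| (1+|a||b|) ≤ (|a|+|b|) |1 - conj a b|` for points in the closed disc. -/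
lemma sharp (a b : ℂ) (ha : Complex.abs a ≤ 1) (hb : Complex.abs b ≤ 1) :
    Complex.abs (a - b) * (1 + Complex.abs a * Complex.abs b)
      ≤ (Complex.abs a + Complex.abs b) * Complex.abs (1 - (starRingEnd ℂ) a * b) := by
  set r := Complex.abs a with hr
  set s := Complex.abs b with hs
  set d := Complex.abs (a - b) with hd
  set m := Complex.abs (1 - (starRingEnd ℂ) a * b) with hm
  have hr0 : 0 ≤ r := Complex.abs.nonneg a
  have hs0 : 0 ≤ s := Complex.abs.nonneg b
  have hd0 : 0 ≤ d := Complex.abs.nonneg _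
  have hm0 : 0 ≤ m := Complex.abs.nonneg _
  set u : ℝ := ((starRingEnd ℂ) a * b).re with hu
  have habs : Complex.abs ((starRingEnd ℂ) a * b) = r * s := by
    rw [map_mul, Complex.abs_conj]
  have hu_lb : -(r * s) ≤ u := by
    have := neg_abs_le (((starRingEnd ℂ) a * b).re)
    have h2 : |(((starRingEnd ℂ) a * b).re)| ≤ r * s := by
      rw [← habs]; exact Complex.abs_re_le_abs _
    linarith [neg_le_neg h2]
  have hd2 : d ^ 2 = r ^ 2 + s ^ 2 - 2 * u := by
    rw [hd, hr, hs, Complex.sq_abs, Complex.sq_abs, Complex.sq_abs]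
    simp only [Complex.normSq_apply, Complex.sub_re, Complex.sub_im, hu, Complex.mul_re,
      Complex.mul_im, Complex.conj_re, Complex.conj_im]
    ring
  have hm2 : m ^ 2 = 1 + r ^ 2 * s ^ 2 - 2 * u := by
    rw [hm, Complex.sq_abs]
    have : r ^ 2 * s ^ 2 = Complex.normSq a * Complex.normSq b := by
      rw [hr, hs, Complex.sq_abs, Complex.sq_abs]
    rw [this]
    simp only [Complex.normSq_apply, Complex.sub_re, Complex.sub_im, hu, Complex.mul_re,
      Complex.mul_im, Complex.conj_re, Complex.conj_im, Complex.one_re, Complex.one_im]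
    ring
  have key : (d * (1 + r * s)) ^ 2 ≤ ((r + s) * m) ^ 2 := by
    have hfact : 0 ≤ (u + r * s) * ((1 - r ^ 2) * (1 - s ^ 2)) := by
      apply mul_nonneg (by linarith)
      apply mul_nonneg <;> nlinarith
    nlinarith [hd2, hm2, hfact]
  exact le_of_pow_le_pow_left₀ two_ne_zero (by positivity) key

lemma mob_def (c z : ℂ) : mob c z = (c - z) / (1 - (starRingEnd ℂ) c * z) := rfl

lemma mulabs_lt {a b : ℂ} (ha : Complex.abs a < 1) (hb : Complex.abs b ≤ 1) :
    Complex.abs a * Complex.abs b < 1 :=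
  lt_of_le_of_lt (mul_le_of_le_one_right (Complex.abs.nonneg a) hb) ha

lemma pd_symm (a b : ℂ) : pd a b = pd b a := by
  unfold pd
  rw [Complex.abs.map_sub]
  congr 1
  rw [← Complex.abs_conj (1 - (starRingEnd ℂ) a * b)]
  congr 1
  simp [map_sub, map_mul, mul_comm]

/-- `pd a b ≤ (|a|+|b|)/(1+|a||b|)` -/
lemma pd_le_ratio {a b : ℂ} (ha : Complex.abs a ≤ 1) (hb : Complex.abs b ≤ 1)
    (hlt : Complex.abs a * Complex.abs b < 1) :
    pd a b ≤ (Complex.abs a + Complex.abs b) / (1 + Complex.abs a * Complex.abs b) := by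
  rw [pd, div_le_div_iff₀ (denom_pos hlt) (by positivity)]
  calc Complex.abs (a - b) * (1 + Complex.abs a * Complex.abs b)
      ≤ (Complex.abs a + Complex.abs b) * Complex.abs (1 - (starRingEnd ℂ) a * b) :=
        sharp a b ha hb
    _ = _ := by ring

lemma ratio_mono {r t s : ℝ} (hr0 : 0 ≤ r) (ht0 : 0 ≤ t) (hr : r ≤ s) (ht : t ≤ s)
    (hs : s < 1) : (r + t) / (1 + r * t) ≤ 2 * s / (1 + s ^ 2) := by
  have h1 : (0:ℝ) < 1 + r * t := by nlinarith
  have h2 : (0:ℝ) < 1 + s ^ 2 := by positivity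
  rw [div_le_div_iff₀ h1 h2]
  have h3 : 0 ≤ (s - r) * (1 - s * t) := mul_nonneg (by linarith) (by nlinarith)
  have h4 : 0 ≤ (s - t) * (1 - s * r) := mul_nonneg (by linarith) (by nlinarith)
  nlinarith [h3, h4]

lemma pd_le_small {a b : ℂ} {s : ℝ} (ha : Complex.abs a ≤ s) (hb : Complex.abs b ≤ s)
    (hs : s < 1) : pd a b ≤ 2 * s / (1 + s ^ 2) := by
  have ha0 := Complex.abs.nonneg a
  have hb0 := Complex.abs.nonneg b
  calc pd a b ≤ (Complex.abs a + Complex.abs b) / (1 + Complex.abs a * Complex.abs b) :=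
        pd_le_ratio (ha.trans hs.le) (hb.trans hs.le)
          (mulabs_lt (lt_of_le_of_lt ha hs) (hb.trans hs.le))
    _ ≤ 2 * s / (1 + s ^ 2) := ratio_mono ha0 hb0 ha hb hs

lemma pd_lt_one {a b : ℂ} (ha : Complex.abs a < 1) (hb : Complex.abs b < 1) : pd a b < 1 := by
  have hlt := mulabs_lt ha hb.le
  have hpos := denom_pos hlt
  rw [pd, div_lt_one hpos]
  have key : Complex.normSq (a - b) < Complex.normSq (1 - (starRingEnd ℂ) a * b) := by
    have hid := normSq_identity a b
    have h1 : 0 < 1 - Complex.normSq a := by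
      rw [← Complex.sq_abs]; nlinarith [Complex.abs.nonneg a]
    have h2 : 0 < 1 - Complex.normSq b := by
      rw [← Complex.sq_abs]; nlinarith [Complex.abs.nonneg b]
    nlinarith
  have h3 : Complex.abs (a - b) ^ 2 < Complex.abs (1 - (starRingEnd ℂ) a * b) ^ 2 := by
    rw [Complex.sq_abs, Complex.sq_abs]; exact key
  nlinarith [Complex.abs.nonneg (a - b)]

lemma mob_mem {c z : ℂ} (hc : Complex.abs c < 1) (hz : Complex.abs z < 1) :
    Complex.abs (mob c z) < 1 := by rw [abs_mob]; exact pd_lt_one hc hz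

lemma mob_self (c : ℂ) : mob c c = 0 := by simp [mob]

lemma mob_zero (c : ℂ) : mob c 0 = c := by simp [mob]

lemma mob_invol {c z : ℂ} (hc : Complex.abs c < 1) (hz : Complex.abs z < 1) :
    mob c (mob c z) = z := by
  have h1 : (1 : ℂ) - (starRingEnd ℂ) c * z ≠ 0 := denom_ne (mulabs_lt hc hz.le)
  have hcc : (1:ℂ) - (starRingEnd ℂ) c * c ≠ 0 := denom_ne (mulabs_lt hc hc.le)
  have hd2 : 1 - (starRingEnd ℂ) c * mob c z
      = (1 - (starRingEnd ℂ) c * c) / (1 - (starRingEnd ℂ) c * z) := by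
    unfold mob; field_simp; ring
  have hnum : c - mob c z
      = z * ((1 - (starRingEnd ℂ) c * c) / (1 - (starRingEnd ℂ) c * z)) := by
    unfold mob; rw [mul_div_assoc', eq_div_iff h1, sub_mul, div_mul_cancel₀ _ h1]; ring
  rw [mob_def c (mob c z), hd2, hnum, mul_div_assoc,
    div_self (div_ne_zero hcc h1), mul_one]

/-- Möbius invariance of the pseudo-hyperbolic distance. -/
lemma pd_mob (c a b : ℂ) (hc : Complex.abs c < 1) (ha : Complex.abs a < 1)
    (hb : Complex.abs b < 1) : pd (mob c a) (mob c b) = pd a b := by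
  have hca : (1 : ℂ) - (starRingEnd ℂ) c * a ≠ 0 := denom_ne (mulabs_lt hc ha.le)
  have hcb : (1 : ℂ) - (starRingEnd ℂ) c * b ≠ 0 := denom_ne (mulabs_lt hc hb.le)
  have hcc : (1 : ℂ) - (starRingEnd ℂ) c * c ≠ 0 := denom_ne (mulabs_lt hc hc.le)
  have hab : (1 : ℂ) - (starRingEnd ℂ) a * b ≠ 0 := denom_ne (mulabs_lt ha hb.le)
  have hA : mob c a - mob c b
      = (b - a) * (1 - (starRingEnd ℂ) c * c) / ((1 - (starRingEnd ℂ) c * a) * (1 - (starRingEnd ℂ) c * b)) := by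
    unfold mob; rw [div_sub_div _ _ hca hcb]; congr 1; ring
  have hconj : (starRingEnd ℂ) (mob c a) = ((starRingEnd ℂ) c - (starRingEnd ℂ) a) / (1 - c * (starRingEnd ℂ) a) := by
    unfold mob
    rw [map_div₀, map_sub, map_sub, map_mul, map_one, Complex.conj_conj]
  have hca' : (1 : ℂ) - c * (starRingEnd ℂ) a ≠ 0 := by
    intro h0
    apply hca
    have := congrArg (starRingEnd ℂ) h0
    simpa [map_sub, map_mul, mul_comm] using this
  have hB : 1 - (starRingEnd ℂ) (mob c a) * mob c b
      = (1 - (starRingEnd ℂ) a * b) * (1 - c * (starRingEnd ℂ) c) / ((1 - c * (starRingEnd ℂ) a) * (1 - (starRingEnd ℂ) c * b)) := by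
    rw [hconj, mob_def]
    rw [div_mul_div_comm, one_sub_div (mul_ne_zero hca' hcb)]; congr 1; ring
  have habs_ca : Complex.abs (1 - c * (starRingEnd ℂ) a) = Complex.abs (1 - (starRingEnd ℂ) c * a) := by
    rw [← Complex.abs_conj (1 - c * (starRingEnd ℂ) a)]
    congr 1
    simp [map_sub, map_mul, mul_comm]
  have habs_cc : Complex.abs (1 - c * (starRingEnd ℂ) c) = Complex.abs (1 - (starRingEnd ℂ) c * c) := by
    rw [mul_comm]
  unfold pd
  rw [hA, hB]
  rw [map_div₀, map_div₀, map_mul, map_mul, map_mul, map_mul]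
  rw [habs_ca, habs_cc]
  have p1 : Complex.abs (1 - (starRingEnd ℂ) c * a) > 0 := denom_pos (mulabs_lt hc ha.le)
  have p2 : Complex.abs (1 - (starRingEnd ℂ) c * b) > 0 := denom_pos (mulabs_lt hc hb.le)
  have p3 : Complex.abs (1 - (starRingEnd ℂ) c * c) > 0 := denom_pos (mulabs_lt hc hc.le)
  have p4 : Complex.abs (1 - (starRingEnd ℂ) a * b) > 0 := denom_pos (mulabs_lt ha hb.le)
  rw [Complex.abs.map_sub b a]
  have hne : Complex.abs (1 - (starRingEnd ℂ) c * c) /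
      (Complex.abs (1 - (starRingEnd ℂ) c * a) * Complex.abs (1 - (starRingEnd ℂ) c * b)) ≠ 0 :=
    ne_of_gt (div_pos p3 (mul_pos p1 p2))
  rw [mul_div_assoc (Complex.abs (a - b)), mul_div_assoc (Complex.abs (1 - (starRingEnd ℂ) a * b)),
    mul_div_mul_right _ _ hne]

/-- Triangle inequality for the pseudo-hyperbolic distance. -/
lemma pd_triangle {a b c : ℂ} (ha : Complex.abs a < 1) (hb : Complex.abs b < 1)
    (hc : Complex.abs c < 1) : pd a b ≤ pd a c + pd c b := by
  have h1 : pd a b = pd (mob c a) (mob c b) := (pd_mob c a b hc ha hb).symm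
  have hx := mob_mem hc ha
  have hy := mob_mem hc hb
  have h2 : pd (mob c a) (mob c b)
      ≤ (Complex.abs (mob c a) + Complex.abs (mob c b)) /
        (1 + Complex.abs (mob c a) * Complex.abs (mob c b)) :=
    pd_le_ratio hx.le hy.le (mulabs_lt hx hy.le)
  have h3 : (Complex.abs (mob c a) + Complex.abs (mob c b)) /
        (1 + Complex.abs (mob c a) * Complex.abs (mob c b))
      ≤ Complex.abs (mob c a) + Complex.abs (mob c b) := by
    apply div_le_self (by positivity)
    nlinarith [Complex.abs.nonneg (mob c a), Complex.abs.nonneg (mob c b)]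
  rw [abs_mob, abs_mob] at h2 h3
  rw [h1, pd_symm c a] at *
  exact h2.trans h3

lemma csmall_lt_one {s : ℝ} (hs0 : 0 ≤ s) (hs : s < 1) : 2 * s / (1 + s ^ 2) < 1 := by
  rw [div_lt_one (by positivity)]
  nlinarith

lemma mob_differentiableOn {c : ℂ} (hc : Complex.abs c < 1) :
    DifferentiableOn ℂ (mob c) (ball (0 : ℂ) 1) := by
  intro z hz
  rw [mem_ball_zero_iff] at hz
  apply DifferentiableAt.differentiableWithinAt
  apply DifferentiableAt.div
  · exact (differentiable_const c).differentiableAt.sub differentiable_id.differentiableAt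
  · exact (differentiable_const (1:ℂ)).differentiableAt.sub
      ((differentiable_const _).differentiableAt.mul differentiable_id.differentiableAt)
  · exact denom_ne (mulabs_lt hc (le_of_lt (by rwa [Complex.norm_eq_abs] at hz)))

lemma mob_differentiableAt {c u : ℂ} (hc : Complex.abs c < 1) (hu : Complex.abs u < 1) :
    DifferentiableAt ℂ (mob c) u := by
  apply DifferentiableAt.div
  · exact (differentiable_const c).differentiableAt.sub differentiable_id.differentiableAt
  · exact (differentiable_const (1:ℂ)).differentiableAt.sub
      ((differentiable_const _).differentiableAt.mul differentiable_id.differentiableAt)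
  · exact denom_ne (mulabs_lt hc hu.le)

/-- Quantitative Schwarz–Pick: a holomorphic map of the disc with image in the closed
disc of radius `s < 1` contracts `pd` by the factor `(1 + 2s/(1+s²))/2 < 1`. -/
lemma schwarz_pick {h : ℂ → ℂ} {s : ℝ} (hs : s < 1)
    (hd : DifferentiableOn ℂ h (ball (0:ℂ) 1))
    (hbd : ∀ z ∈ ball (0:ℂ) 1, Complex.abs (h z) ≤ s) {a b : ℂ}
    (ha : a ∈ ball (0:ℂ) 1) (hb : b ∈ ball (0:ℂ) 1) :
    pd (h a) (h b) ≤ (1 + 2 * s / (1 + s ^ 2)) / 2 * pd a b := by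
  rw [mem_ball_zero_iff] at ha hb
  rw [Complex.norm_eq_abs] at ha hb
  have hs0 : 0 ≤ s := le_trans (Complex.abs.nonneg (h 0)) (hbd 0 (by simp))
  set c2 := 2 * s / (1 + s ^ 2) with hc2
  have hc2_lt : c2 < 1 := csmall_lt_one hs0 hs
  have hc2_0 : 0 ≤ c2 := by positivity
  set c' := (1 + c2) / 2 with hc'
  have hc'_lt : c' < 1 := by rw [hc']; linarith
  have hc2c' : c2 < c' := by rw [hc']; linarith
  have hmem : ∀ z ∈ ball (0:ℂ) 1, Complex.abs z < 1 := by
    intro z hz; rwa [mem_ball_zero_iff, Complex.norm_eq_abs] at hz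
  have hha : Complex.abs (h a) ≤ s := hbd a (by rwa [mem_ball_zero_iff, Complex.norm_eq_abs])
  have hha1 : Complex.abs (h a) < 1 := lt_of_le_of_lt hha hs
  set F : ℂ → ℂ := fun ζ => mob (h a) (h (mob a ζ)) with hF
  have hF0 : F 0 = 0 := by rw [hF]; simp only [mob_zero, mob_self]
  have hFd : DifferentiableOn ℂ F (ball (0:ℂ) 1) := by
    intro ζ hζ
    have hζ1 : Complex.abs ζ < 1 := hmem ζ hζ
    have hin : Complex.abs (mob a ζ) < 1 := mob_mem ha hζ1
    have hin' : mob a ζ ∈ ball (0:ℂ) 1 := by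
      rwa [mem_ball_zero_iff, Complex.norm_eq_abs]
    have d1 : DifferentiableWithinAt ℂ (mob a) (ball (0:ℂ) 1) ζ :=
      (mob_differentiableAt ha hζ1).differentiableWithinAt
    have d2 : DifferentiableWithinAt ℂ (fun ζ => h (mob a ζ)) (ball (0:ℂ) 1) ζ := by
      apply (hd (mob a ζ) hin').comp ζ d1
      intro x hx
      rw [mem_ball_zero_iff, Complex.norm_eq_abs]
      exact mob_mem ha (hmem x hx)
    have hval : Complex.abs (h (mob a ζ)) < 1 := lt_of_le_of_lt (hbd _ hin') hs
    exact (mob_differentiableAt hha1 hval).comp_differentiableWithinAt ζ d2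
  have hFmaps : MapsTo F (ball (0:ℂ) 1) (ball (F 0) c') := by
    intro ζ hζ
    rw [hF0, mem_ball_zero_iff, Complex.norm_eq_abs]
    have hζ1 : Complex.abs ζ < 1 := hmem ζ hζ
    have hin' : mob a ζ ∈ ball (0:ℂ) 1 := by
      rw [mem_ball_zero_iff, Complex.norm_eq_abs]; exact mob_mem ha hζ1
    have : Complex.abs (mob (h a) (h (mob a ζ))) ≤ c2 := by
      rw [abs_mob]
      exact pd_le_small hha (hbd _ hin') hs
    exact lt_of_le_of_lt this hc2c'
  -- apply Schwarz at ζ = mob a b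
  have hζmem : mob a b ∈ ball (0:ℂ) 1 := by
    rw [mem_ball_zero_iff, Complex.norm_eq_abs]; exact mob_mem ha hb
  have hsch := Complex.dist_le_div_mul_dist_of_mapsTo_ball hFd (hFmaps.mono_right ball_subset_closedBall) hζmem
  rw [hF0] at hsch
  simp only [dist_zero_right, div_one] at hsch
  have hFval : F (mob a b) = mob (h a) (h b) := by
    rw [hF]; simp only; rw [mob_invol ha hb]
  rw [hFval] at hsch
  rw [Complex.norm_eq_abs, Complex.norm_eq_abs, abs_mob, abs_mob] at hsch
  calc pd (h a) (h b) ≤ c' * pd a b := hsch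
    _ = (1 + 2 * s / (1 + s ^ 2)) / 2 * pd a b := by rw [hc', hc2]

lemma cfactor_lt_one {s : ℝ} (hs0 : 0 ≤ s) (hs : s < 1) :
    (1 + 2 * s / (1 + s ^ 2)) / 2 < 1 := by
  have := csmall_lt_one hs0 hs; linarith

lemma cfactor_nonneg {s : ℝ} (hs0 : 0 ≤ s) : 0 ≤ (1 + 2 * s / (1 + s ^ 2)) / 2 := by
  positivity

/-- Euclidean distance is at most `2 pd` inside the disc. -/
lemma dist_le_two_pd {a b : ℂ} (ha : Complex.abs a ≤ 1) (hb : Complex.abs b ≤ 1)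
    (hlt : Complex.abs a * Complex.abs b < 1) :
    Complex.abs (a - b) ≤ 2 * pd a b := by
  have hpos := denom_pos hlt
  have heq : Complex.abs (a - b) = pd a b * Complex.abs (1 - (starRingEnd ℂ) a * b) := by
    rw [pd, div_mul_cancel₀ _ (ne_of_gt hpos)]
  rw [heq]
  have h2 : Complex.abs (1 - (starRingEnd ℂ) a * b) ≤ 2 := by
    calc Complex.abs (1 - (starRingEnd ℂ) a * b) ≤ 1 + Complex.abs a * Complex.abs b :=
          denom_upper
      _ ≤ 2 := by nlinarith [Complex.abs.nonneg a, Complex.abs.nonneg b]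
  calc pd a b * Complex.abs (1 - (starRingEnd ℂ) a * b) ≤ pd a b * 2 :=
        mul_le_mul_of_nonneg_left h2 (pd_nonneg a b)
    _ = 2 * pd a b := by ring

lemma pd_le_dist_div {a b : ℂ} {τ : ℝ} (ha : Complex.abs a ≤ τ) (hb : Complex.abs b ≤ τ)
    (hτ : τ < 1) (hτ0 : 0 ≤ τ) : pd a b ≤ Complex.abs (a - b) / (1 - τ ^ 2) := by
  have hlow : 1 - τ ^ 2 ≤ Complex.abs (1 - (starRingEnd ℂ) a * b) := by
    have : Complex.abs a * Complex.abs b ≤ τ ^ 2 := by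
      nlinarith [Complex.abs.nonneg a, Complex.abs.nonneg b]
    linarith [denom_lower (a := a) (b := b)]
  have hpos : (0:ℝ) < 1 - τ ^ 2 := by nlinarith
  rw [pd]
  exact div_le_div_of_nonneg_left (Complex.abs.nonneg _) hpos hlow

lemma fixed_unique {h : ℂ → ℂ} {s : ℝ} (hs : s < 1)
    (hd : DifferentiableOn ℂ h (ball (0:ℂ) 1))
    (hbd : ∀ z ∈ ball (0:ℂ) 1, Complex.abs (h z) ≤ s) {a b : ℂ}
    (ha : a ∈ ball (0:ℂ) 1) (hb : b ∈ ball (0:ℂ) 1)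
    (hfa : h a = a) (hfb : h b = b) : a = b := by
  have hs0 : 0 ≤ s := le_trans (Complex.abs.nonneg (h 0)) (hbd 0 (by simp))
  have key := schwarz_pick hs hd hbd ha hb
  rw [hfa, hfb] at key
  have hc := cfactor_lt_one hs0 hs
  have h0 : pd a b = 0 := by nlinarith [pd_nonneg a b]
  rw [mem_ball_zero_iff, Complex.norm_eq_abs] at ha hb
  have hpos := denom_pos (mulabs_lt ha hb.le)
  rw [pd, div_eq_zero_iff] at h0
  rcases h0 with h0 | h0
  · exact sub_eq_zero.mp (Complex.abs.eq_zero.mp h0)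
  · linarith

/-- Banach-type existence of a fixed point in the closed ball of radius `τ`. -/
lemma fixed_exists {h : ℂ → ℂ} {τ : ℝ} (hτ : τ < 1)
    (hd : DifferentiableOn ℂ h (ball (0:ℂ) 1))
    (hbd : ∀ z ∈ ball (0:ℂ) 1, Complex.abs (h z) ≤ τ) :
    ∃ x : ℂ, Complex.abs x ≤ τ ∧ h x = x := by
  have hτ0 : 0 ≤ τ := le_trans (Complex.abs.nonneg (h 0)) (hbd 0 (by simp))
  set c' := (1 + 2 * τ / (1 + τ ^ 2)) / 2 with hc'
  have hc'_lt : c' < 1 := cfactor_lt_one hτ0 hτ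
  have hc'_0 : 0 ≤ c' := cfactor_nonneg hτ0
  set C : Set ℂ := closedBall (0:ℂ) τ with hC
  have hsub : C ⊆ ball (0:ℂ) 1 := closedBall_subset_ball (by linarith)
  have hmaps : MapsTo h C C := by
    intro x hx
    rw [hC, mem_closedBall_zero_iff, Complex.norm_eq_abs]
    exact hbd x (hsub hx)
  have hiter : ∀ n : ℕ, ∀ x ∈ C, h^[n] x ∈ C := fun n => MapsTo.iterate hmaps n
  have hpd_iter : ∀ n : ℕ, ∀ x ∈ C, ∀ y ∈ C,
      pd (h^[n] x) (h^[n] y) ≤ c' ^ n * pd x y := by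
    intro n
    induction n with
    | zero => intro x hx y hy; simp
    | succ n ih =>
      intro x hx y hy
      rw [Function.iterate_succ_apply', Function.iterate_succ_apply']
      calc pd (h (h^[n] x)) (h (h^[n] y)) ≤ c' * pd (h^[n] x) (h^[n] y) :=
            schwarz_pick hτ hd hbd (hsub (hiter n x hx)) (hsub (hiter n y hy))
        _ ≤ c' * (c' ^ n * pd x y) :=
            mul_le_mul_of_nonneg_left (ih x hx y hy) hc'_0
        _ = c' ^ (n+1) * pd x y := by ring
  have hpos2 : (0:ℝ) < 1 - τ ^ 2 := by nlinarith
  obtain ⟨n, hn⟩ : ∃ n : ℕ, c' ^ n < (1 - τ ^ 2) / 4 :=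
    exists_pow_lt_of_lt_one (by positivity) hc'_lt
  set K : ℝ := 2 * c' ^ n / (1 - τ ^ 2) with hK
  have hK0 : 0 ≤ K := by positivity
  have hK1 : K < 1 := by
    rw [hK, div_lt_one hpos2]; nlinarith
  have hlip : ∀ x ∈ C, ∀ y ∈ C, dist (h^[n] x) (h^[n] y) ≤ K * dist x y := by
    intro x hx y hy
    have hx1 : Complex.abs x ≤ τ := by rwa [hC, mem_closedBall_zero_iff, Complex.norm_eq_abs] at hx
    have hy1 : Complex.abs y ≤ τ := by rwa [hC, mem_closedBall_zero_iff, Complex.norm_eq_abs] at hy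
    have hxC := hiter n x hx
    have hyC := hiter n y hy
    have hx2 : Complex.abs (h^[n] x) ≤ τ := by
      rwa [hC, mem_closedBall_zero_iff, Complex.norm_eq_abs] at hxC
    have hy2 : Complex.abs (h^[n] y) ≤ τ := by
      rwa [hC, mem_closedBall_zero_iff, Complex.norm_eq_abs] at hyC
    rw [Complex.dist_eq, Complex.dist_eq]
    calc Complex.abs (h^[n] x - h^[n] y) ≤ 2 * pd (h^[n] x) (h^[n] y) :=
          dist_le_two_pd (hx2.trans hτ.le) (hy2.trans hτ.le)
            (mulabs_lt (lt_of_le_of_lt hx2 hτ) (hy2.trans hτ.le))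
      _ ≤ 2 * (c' ^ n * pd x y) := by
          have := hpd_iter n x hx y hy; linarith
      _ ≤ 2 * (c' ^ n * (Complex.abs (x - y) / (1 - τ ^ 2))) := by
          have h5 := pd_le_dist_div hx1 hy1 hτ hτ0
          have hcn : (0:ℝ) ≤ c' ^ n := by positivity
          nlinarith
      _ = K * Complex.abs (x - y) := by rw [hK]; field_simp
  -- Banach fixed point on the complete set C
  have hCc : IsComplete C := isClosed_closedBall.isComplete
  have hmaps_n : MapsTo h^[n] C C := fun x hx => hiter n x hx
  have hKnn : (0:ℝ) ≤ K := hK0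
  have hcontr : ContractingWith ⟨K, hK0⟩ (hmaps_n.restrict h^[n] C C) := by
    constructor
    · exact_mod_cast hK1
    · apply LipschitzWith.of_dist_le_mul
      rintro ⟨x, hx⟩ ⟨y, hy⟩
      simp only [MapsTo.restrict, Subtype.dist_eq]
      exact hlip x hx y hy
  have h0C : (0:ℂ) ∈ C := by simp [hC, hτ0]
  obtain ⟨y, hyC, hyfix, -, -⟩ :=
    hcontr.exists_fixedPoint' hCc hmaps_n h0C (edist_ne_top _ _)
  -- h y is also a fixed point of h^[n] inside C
  have hhy : h y ∈ C := hmaps hyC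
  have hyfix' : h^[n] (h y) = h y := by
    have : h^[n] (h y) = h (h^[n] y) := by
      rw [← Function.iterate_succ_apply h n y, Function.iterate_succ_apply' h n y]
    rw [this, hyfix]
  -- uniqueness of the fixed point of the restricted contraction
  have : h y = y := by
    have hu := hcontr.fixedPoint_unique' (x := ⟨h y, hhy⟩) (y := ⟨y, hyC⟩) ?_ ?_
    · exact congrArg Subtype.val hu
    · apply Subtype.ext; simpa [MapsTo.restrict, Subtype.map] using hyfix'
    · apply Subtype.ext; simpa [MapsTo.restrict, Subtype.map, IsFixedPt] using hyfix
  refine ⟨y, ?_, this⟩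
  rwa [hC, mem_closedBall_zero_iff, Complex.norm_eq_abs] at hyC

/-- A map with relatively compact image in the disc is bounded by some `s < 1`. -/
lemma exists_sup_bound {F : ℂ → ℂ}
    (hc : IsCompact (closure (F '' ball (0:ℂ) 1)))
    (hsub : closure (F '' ball (0:ℂ) 1) ⊆ ball (0:ℂ) 1) :
    ∃ s : ℝ, 0 ≤ s ∧ s < 1 ∧ ∀ z ∈ ball (0:ℂ) 1, Complex.abs (F z) ≤ s := by
  have hne : (closure (F '' ball (0:ℂ) 1)).Nonempty := by
    apply Set.Nonempty.closure
    exact ⟨F 0, mem_image_of_mem F (by simp)⟩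
  obtain ⟨x₀, hx₀mem, hx₀max⟩ :=
    hc.exists_isMaxOn hne (Complex.continuous_abs.continuousOn)
  refine ⟨Complex.abs x₀, Complex.abs.nonneg x₀, ?_, ?_⟩
  · have := hsub hx₀mem
    rwa [mem_ball_zero_iff, Complex.norm_eq_abs] at this
  · intro z hz
    exact hx₀max (subset_closure (mem_image_of_mem F hz))

/-- Rescaling a holomorphic map to the unit disc. -/
lemma scaled_diff {F : ℂ → ℂ} {σ : ℝ} (hσ0 : 0 < σ) (hσ1 : σ < 1)
    (hd : DifferentiableOn ℂ F (ball (0:ℂ) 1)) :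
    DifferentiableOn ℂ (fun ζ => F ((σ:ℂ) * ζ) / (σ:ℂ)) (ball (0:ℂ) 1) := by
  apply DifferentiableOn.div_const
  apply DifferentiableOn.comp hd
  · exact (differentiable_const ((σ:ℂ)) |>.mul differentiable_id).differentiableOn
  · intro ζ hζ
    rw [mem_ball_zero_iff] at hζ ⊢
    rw [norm_mul]
    calc ‖(σ:ℂ)‖ * ‖ζ‖ ≤ ‖(σ:ℂ)‖ * 1 := by
          apply mul_le_mul_of_nonneg_left hζ.le (norm_nonneg _)
      _ = σ := by rw [mul_one, Complex.norm_real, Real.norm_of_nonneg hσ0.le]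
      _ < 1 := hσ1

lemma scaled_mem {σ : ℝ} (hσ0 : 0 < σ) {ζ : ℂ} (hζ : ζ ∈ ball (0:ℂ) 1) :
    (σ:ℂ) * ζ ∈ closedBall (0:ℂ) σ := by
  rw [mem_ball_zero_iff] at hζ
  rw [mem_closedBall_zero_iff, norm_mul, Complex.norm_real, Real.norm_of_nonneg hσ0.le]
  nlinarith [norm_nonneg ζ]

set_option maxHeartbeats 1000000 in
/-- Lemma 2.1 in the one-dimensional case: if holomorphic self-maps `f_k` of the
unit disc `Δ` with relatively compact images converge locally uniformly on `Δ`
to `f` (also with relatively compact image), then their unique fixed points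
`τ(f_k)` converge to the unique fixed point `τ(f)`. -/
theorem heins_map_continuous_unit_disc
    (f : ℕ → ℂ → ℂ) (g : ℂ → ℂ)
    (hf : ∀ k, DifferentiableOn ℂ (f k) (Metric.ball (0 : ℂ) 1))
    (hfmaps : ∀ k, Set.MapsTo (f k) (Metric.ball (0 : ℂ) 1)
      (Metric.ball (0 : ℂ) 1))
    (hfcpt : ∀ k, IsCompact (closure (f k '' Metric.ball (0 : ℂ) 1)))
    (hfsub : ∀ k, closure (f k '' Metric.ball (0 : ℂ) 1) ⊆ Metric.ball (0 : ℂ) 1)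
    (hg : DifferentiableOn ℂ g (Metric.ball (0 : ℂ) 1))
    (hgmaps : Set.MapsTo g (Metric.ball (0 : ℂ) 1) (Metric.ball (0 : ℂ) 1))
    (hgcpt : IsCompact (closure (g '' Metric.ball (0 : ℂ) 1)))
    (hgsub : closure (g '' Metric.ball (0 : ℂ) 1) ⊆ Metric.ball (0 : ℂ) 1)
    (hconv : TendstoLocallyUniformlyOn (fun k => f k) g Filter.atTop
      (Metric.ball (0 : ℂ) 1))
    (z : ℕ → ℂ) (hz : ∀ k, z k ∈ Metric.ball (0 : ℂ) 1)
    (hzfix : ∀ k, f k (z k) = z k)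
    (w : ℂ) (hw : w ∈ Metric.ball (0 : ℂ) 1) (hwfix : g w = w) :
    Filter.Tendsto z Filter.atTop (nhds w) := by
  obtain ⟨ρ, hρ0, hρ1, hρbd⟩ := exists_sup_bound hgcpt hgsub
  set σ : ℝ := (1 + ρ) / 2 with hσdef
  have hσ0 : 0 < σ := by rw [hσdef]; linarith
  have hσ1 : σ < 1 := by rw [hσdef]; linarith
  have hρσ : ρ < σ := by rw [hσdef]; linarith
  set σ' : ℝ := (ρ + σ) / 2 with hσ'def
  have hσ'ρ : ρ < σ' := by rw [hσ'def]; linarith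
  have hσ'σ : σ' < σ := by rw [hσ'def]; linarith
  have hσ'0 : 0 < σ' := by rw [hσ'def]; linarith
  set τ : ℝ := σ' / σ with hτdef
  have hτ1 : τ < 1 := by rw [hτdef, div_lt_one hσ0]; linarith
  have hτ0 : 0 ≤ τ := by positivity
  set ε₀ : ℝ := σ' - ρ with hε₀def
  have hε₀pos : 0 < ε₀ := by rw [hε₀def]; linarith
  set K : Set ℂ := closedBall (0:ℂ) σ with hKdef
  have hKsub : K ⊆ ball (0:ℂ) 1 := closedBall_subset_ball hσ1
  have hKc : IsCompact K := isCompact_closedBall _ _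
  have huc : TendstoUniformlyOn (fun k => f k) g Filter.atTop K :=
    (tendstoLocallyUniformlyOn_iff_tendstoUniformlyOn_of_compact hKc).mp (hconv.mono hKsub)
  rw [Metric.tendstoUniformlyOn_iff] at huc
  have hwρ : Complex.abs w ≤ ρ := by rw [← hwfix]; exact hρbd w hw
  have hσC : (σ:ℂ) ≠ 0 := by exact_mod_cast hσ0.ne'
  have habs_σ : Complex.abs ((σ:ℂ)) = σ := by
    rw [Complex.abs_ofReal, abs_of_pos hσ0]
  -- scaled g
  set gs : ℂ → ℂ := fun ζ => g ((σ:ℂ) * ζ) / (σ:ℂ) with hgsdef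
  have hgsd : DifferentiableOn ℂ gs (ball (0:ℂ) 1) := scaled_diff hσ0 hσ1 hg
  have hgsbd : ∀ ζ ∈ ball (0:ℂ) 1, Complex.abs (gs ζ) ≤ τ := by
    intro ζ hζ
    have hmem : (σ:ℂ) * ζ ∈ ball (0:ℂ) 1 := hKsub (scaled_mem hσ0 hζ)
    rw [hgsdef]
    simp only
    rw [map_div₀, habs_σ, hτdef]
    gcongr
    calc Complex.abs (g ((σ:ℂ) * ζ)) ≤ ρ := hρbd _ hmem
      _ ≤ σ' := hσ'ρ.le
  set c : ℝ := (1 + 2 * τ / (1 + τ ^ 2)) / 2 with hcdef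
  have hc1 : c < 1 := cfactor_lt_one hτ0 hτ1
  have hc0 : 0 ≤ c := cfactor_nonneg hτ0
  set P : ℝ := 1 - c with hPdef
  set Q : ℝ := 1 - τ ^ 2 with hQdef
  have hP : 0 < P := by rw [hPdef]; linarith
  have hQ : 0 < Q := by rw [hQdef]; nlinarith
  rw [Metric.tendsto_nhds]
  intro ε hε
  set δ : ℝ := min ε₀ (ε * P * Q / 2) with hδdef
  have hδpos : 0 < δ := by
    rw [hδdef]
    apply lt_min hε₀pos
    positivity
  filter_upwards [huc δ hδpos] with k hk
  -- bound for f k on K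
  have hbK : ∀ x ∈ K, Complex.abs (f k x) ≤ σ' := by
    intro x hx
    have h1 : Complex.abs (g x) ≤ ρ := hρbd x (hKsub hx)
    have h2 : dist (g x) (f k x) < δ := hk x hx
    rw [Complex.dist_eq, Complex.norm_eq_abs] at h2
    have h3 : Complex.abs (f k x) ≤ Complex.abs (g x) + Complex.abs (g x - f k x) := by
      have h5 := norm_sub_norm_le (f k x) (g x)
      rw [Complex.norm_eq_abs, Complex.norm_eq_abs, Complex.norm_eq_abs] at h5
      have h4 : Complex.abs (f k x - g x) = Complex.abs (g x - f k x) :=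
        Complex.abs.map_sub _ _
      linarith
    have hδε₀ : δ ≤ ε₀ := min_le_left _ _
    calc Complex.abs (f k x) ≤ Complex.abs (g x) + Complex.abs (g x - f k x) := h3
      _ ≤ ρ + δ := by linarith
      _ ≤ ρ + ε₀ := by linarith
      _ = σ' := by rw [hε₀def]; ring
  -- scaled f k
  set fs : ℂ → ℂ := fun ζ => f k ((σ:ℂ) * ζ) / (σ:ℂ) with hfsdef
  have hfsd : DifferentiableOn ℂ fs (ball (0:ℂ) 1) := scaled_diff hσ0 hσ1 (hf k)
  have hfsbd : ∀ ζ ∈ ball (0:ℂ) 1, Complex.abs (fs ζ) ≤ τ := by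
    intro ζ hζ
    have hmem : (σ:ℂ) * ζ ∈ K := scaled_mem hσ0 hζ
    rw [hfsdef]
    simp only
    rw [map_div₀, habs_σ, hτdef]
    gcongr
    exact hbK _ hmem
  -- localization of z k
  have hzloc : Complex.abs (z k) ≤ σ' := by
    obtain ⟨x, hxτ, hxfix⟩ := fixed_exists hτ1 hfsd hfsbd
    have hfx : f k ((σ:ℂ) * x) = (σ:ℂ) * x := by
      rw [hfsdef] at hxfix
      simp only at hxfix
      field_simp at hxfix
      rw [hxfix]
    have habsx : Complex.abs ((σ:ℂ) * x) ≤ σ' := by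
      rw [map_mul, habs_σ]
      calc σ * Complex.abs x ≤ σ * τ := by
            apply mul_le_mul_of_nonneg_left hxτ hσ0.le
        _ = σ' := by rw [hτdef]; field_simp
    have hmemx : (σ:ℂ) * x ∈ ball (0:ℂ) 1 := by
      rw [mem_ball_zero_iff, Complex.norm_eq_abs]
      exact lt_of_le_of_lt habsx (lt_trans hσ'σ hσ1)
    obtain ⟨s, hs0, hs1, hsbd⟩ := exists_sup_bound (hfcpt k) (hfsub k)
    have := fixed_unique hs1 (hf k) hsbd (hz k) hmemx (hzfix k) hfx
    rw [this]
    exact habsx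
  -- the scaled fixed points
  set za : ℂ := z k / (σ:ℂ) with hzadef
  set wa : ℂ := w / (σ:ℂ) with hwadef
  have hzaτ : Complex.abs za ≤ τ := by
    rw [hzadef, map_div₀, habs_σ, hτdef]
    gcongr
  have hwaτ : Complex.abs wa ≤ τ := by
    rw [hwadef, map_div₀, habs_σ, hτdef]
    gcongr
    exact le_trans hwρ hσ'ρ.le
  have hza1 : Complex.abs za < 1 := lt_of_le_of_lt hzaτ hτ1
  have hwa1 : Complex.abs wa < 1 := lt_of_le_of_lt hwaτ hτ1
  have hzamem : za ∈ ball (0:ℂ) 1 := by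
    rwa [mem_ball_zero_iff, Complex.norm_eq_abs]
  have hwamem : wa ∈ ball (0:ℂ) 1 := by
    rwa [mem_ball_zero_iff, Complex.norm_eq_abs]
  have hσza : (σ:ℂ) * za = z k := by rw [hzadef]; field_simp
  have hσwa : (σ:ℂ) * wa = w := by rw [hwadef]; field_simp
  have hgswa : gs wa = wa := by
    rw [hgsdef]; simp only
    rw [hσwa, hwfix, hwadef]
  have hfsza : fs za = za := by
    rw [hfsdef]; simp only
    rw [hσza, hzfix k, hzadef]
  -- triangle + contraction
  have hgsza1 : Complex.abs (gs za) < 1 := lt_of_le_of_lt (hgsbd za hzamem) hτ1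
  have htri : pd za wa ≤ pd za (gs za) + pd (gs za) wa :=
    pd_triangle hza1 hwa1 hgsza1
  have hcontr : pd (gs za) wa ≤ c * pd za wa := by
    have := schwarz_pick hτ1 hgsd hgsbd hzamem hwamem
    rw [hgswa] at this
    rw [hcdef]
    exact this
  set A : ℝ := pd za wa with hAdef
  set B : ℝ := pd za (gs za) with hBdef
  have hAP : A * P ≤ B := by
    have : A ≤ B + c * A := by
      calc A ≤ pd za (gs za) + pd (gs za) wa := htri
        _ ≤ B + c * A := by rw [hBdef]; linarith [hcontr]
    rw [hPdef]; nlinarith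
  -- B ≤ |fs za - gs za| / Q
  set D : ℝ := Complex.abs (fs za - gs za) with hDdef
  have hBD : B * Q ≤ D := by
    have hb1 : Complex.abs (fs za) ≤ τ := hfsbd za hzamem
    have hb2 : Complex.abs (gs za) ≤ τ := hgsbd za hzamem
    have := pd_le_dist_div hb1 hb2 hτ1 hτ0
    rw [hfsza] at this
    rw [hBdef, hQdef]
    rw [← hfsza] at this ⊢
    rw [hfsza]
    have hQ' : (0:ℝ) < 1 - τ ^ 2 := hQ
    calc pd za (gs za) * (1 - τ ^ 2)
        = pd (fs za) (gs za) * (1 - τ ^ 2) := by rw [hfsza]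
      _ ≤ Complex.abs (fs za - gs za) / (1 - τ ^ 2) * (1 - τ ^ 2) := by
          have h' := pd_le_dist_div hb1 hb2 hτ1 hτ0
          exact mul_le_mul_of_nonneg_right h' hQ'.le
      _ = D := by rw [hDdef]; field_simp
  -- D * σ = dist
  have hDσ : D * σ = Complex.abs (f k (z k) - g (z k)) := by
    rw [hDdef, hfsdef, hgsdef]
    simp only
    rw [hσza, div_sub_div_same, map_div₀, habs_σ]
    field_simp
  have hδk : Complex.abs (f k (z k) - g (z k)) < δ := by
    have hzK : z k ∈ K := by
      rw [hKdef, mem_closedBall_zero_iff, Complex.norm_eq_abs]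
      exact le_trans hzloc hσ'σ.le
    have := hk (z k) hzK
    rw [Complex.dist_eq, Complex.norm_eq_abs, Complex.abs.map_sub] at this
    exact this
  -- assemble
  have hE : Complex.abs (za - wa) ≤ 2 * A := by
    rw [hAdef]
    exact dist_le_two_pd (hzaτ.trans hτ1.le) (hwaτ.trans hτ1.le)
      (mulabs_lt hza1 (hwaτ.trans hτ1.le))
  have hdist : dist (z k) w = σ * Complex.abs (za - wa) := by
    rw [Complex.dist_eq, Complex.norm_eq_abs]
    have : z k - w = (σ:ℂ) * (za - wa) := by
      rw [mul_sub, hσza, hσwa]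
    rw [this, map_mul, habs_σ]
  have hA0 : 0 ≤ A := pd_nonneg _ _
  have hB0 : 0 ≤ B := pd_nonneg _ _
  have hD0 : 0 ≤ D := Complex.abs.nonneg _
  have hδle : δ ≤ ε * P * Q / 2 := min_le_right _ _
  have hAPQ : A * (P * Q) ≤ D := by
    have t1 : A * P * Q ≤ B * Q := mul_le_mul_of_nonneg_right hAP hQ.le
    calc A * (P * Q) = A * P * Q := by ring
      _ ≤ B * Q := t1
      _ ≤ D := hBD
  have hDσδ : D * σ < δ := by rw [hDσ]; exact hδk
  have final : σ * Complex.abs (za - wa) * (P * Q) < ε * (P * Q) := by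
    have u1 : σ * Complex.abs (za - wa) * (P * Q) ≤ σ * (2 * A) * (P * Q) := by
      have := mul_le_mul_of_nonneg_right
        (mul_le_mul_of_nonneg_left hE hσ0.le) (mul_pos hP hQ).le
      linarith
    have u2 : σ * (2 * A) * (P * Q) = 2 * σ * (A * (P * Q)) := by ring
    have u3 : 2 * σ * (A * (P * Q)) ≤ 2 * σ * D := by
      apply mul_le_mul_of_nonneg_left hAPQ
      positivity
    have u4 : 2 * σ * D = 2 * (D * σ) := by ring
    have u5 : 2 * (D * σ) < 2 * δ := by linarith
    have u6 : 2 * δ ≤ ε * (P * Q) := by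
      calc 2 * δ ≤ 2 * (ε * P * Q / 2) := by linarith
        _ = ε * (P * Q) := by ring
    linarith
  rw [hdist]
  have hPQ : 0 < P * Q := mul_pos hP hQ
  exact lt_of_mul_lt_mul_right (by linarith [final]) hPQ.le
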